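/- Let Q be a Markov kernel on a measurable space X satisfying the super-Lyapunov drift condition: there are constants c > 0, b ≥ 1, δ ∈ (1/2, 1], R₀ ≥ 0 and a measurable function Ṽ : X → [e, ∞) such that, setting W̃ = log Ṽ, for every x ∈ X one has QṼ(x) ≤ exp(−c W̃(x)^δ) Ṽ(x) if W̃(x) > R₀, and QṼ(x) ≤ b if W̃(x) ≤ R₀. Fix τ ∈ ℕ, τ ≥ 1, and define the Markov kernel P on X^{τ+1} by P((x_0,…,x_τ), B) = ∫_X 1_B(x_1,…,x_τ, y) Q(x_τ, dy). Then there exist constants c₀ > 0, c_P > 0, b_P > 0 and R_P ≥ 0 such that, setting V(x_0,…,x_τ) = exp( c₀ Σ_{i=0}^{τ−1} (i+1) W̃(x_i)^δ + W̃(x_τ) ) and W = log V, for every (x_0,…,x_τ) ∈ X^{τ+1}: PV(x_0,…,x_τ) ≤ exp( −c_P W(x_0,…,x_τ)^δ ) V(x_0,…,x_τ) · 1{W(x_0,…,x_τ) ≥ R_P} + b_P · 1{W(x_0,…,x_τ) < R_P}. -/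

import Mathlib

open MeasureTheory ProbabilityTheory

/-- The left-shift on paths in `X^{τ+1}`: drop the first coordinate and append `y`. -/
def shiftPath {X : Type*} (τ : ℕ) (x : Fin (τ + 1) → X) (y : X) : Fin (τ + 1) → X :=
  fun i => if h : (i : ℕ) < τ then x ⟨(i : ℕ) + 1, by omega⟩ else y

/-- The log-Lyapunov function `W(x_0,…,x_τ) = c₀ ∑_{i=0}^{τ−1} (i+1) W̃(x_i)^δ + W̃(x_τ)`
on `X^{τ+1}`. -/
noncomputable def tdW {X : Type*} (τ : ℕ) (Wt : X → ℝ) (δ c₀ : ℝ)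
    (x : Fin (τ + 1) → X) : ℝ :=
  c₀ * ∑ i : Fin τ, (((i : ℕ) : ℝ) + 1) * Wt (x i.castSucc) ^ δ + Wt (x (Fin.last τ))

/-- If `Q` satisfies the super-Lyapunov drift condition with function
`Ṽ`, then the shifted kernel `P` on `X^{τ+1}` (shift left, draw the new last coordinate
from `Q`) satisfies a super-Lyapunov drift condition for the Lyapunov function
`V(x_0,…,x_τ) = exp(c₀ ∑_{i<τ} (i+1) W̃(x_i)^δ + W̃(x_τ))`, for suitable constants
`c₀, c_P, b_P > 0` and `R_P ≥ 0`. -/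
private lemma rpow_add_le' {a b p : ℝ} (ha : 0 ≤ a) (hb : 0 ≤ b) (hp : 0 ≤ p) (hp1 : p ≤ 1) :
    (a + b) ^ p ≤ a ^ p + b ^ p := by
  have h := NNReal.rpow_add_le_add_rpow a.toNNReal b.toNNReal hp hp1
  have := NNReal.coe_le_coe.2 h
  push_cast [NNReal.coe_rpow, Real.coe_toNNReal _ ha, Real.coe_toNNReal _ hb,
    Real.coe_toNNReal _ (add_nonneg ha hb)] at this
  simpa using this

set_option maxHeartbeats 2000000 in
theorem td_lambda_shifted_kernel_drift {X : Type*} [MeasurableSpace X]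
    (Q : Kernel X X) [IsMarkovKernel Q]
    (Vt : X → ℝ) (hVmeas : Measurable Vt) (hVe : ∀ x, Real.exp 1 ≤ Vt x)
    (c b δ R₀ : ℝ) (hc : 0 < c) (hb : 1 ≤ b)
    (hδ1 : 1 / 2 < δ) (hδ2 : δ ≤ 1) (hR₀ : 0 ≤ R₀)
    (Wt : X → ℝ) (hWt : Wt = fun x => Real.log (Vt x))
    (hdrift₁ : ∀ x, R₀ < Wt x →
      ∫⁻ y, ENNReal.ofReal (Vt y) ∂(Q x) ≤
        ENNReal.ofReal (Real.exp (-c * Wt x ^ δ) * Vt x))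
    (hdrift₂ : ∀ x, Wt x ≤ R₀ → ∫⁻ y, ENNReal.ofReal (Vt y) ∂(Q x) ≤ ENNReal.ofReal b)
    (τ : ℕ) (hτ : 1 ≤ τ) :
    ∃ c₀ cP bP RP : ℝ, 0 < c₀ ∧ 0 < cP ∧ 0 < bP ∧ 0 ≤ RP ∧
      ∀ x : Fin (τ + 1) → X,
        ∫⁻ y, ENNReal.ofReal (Real.exp (tdW τ Wt δ c₀ (shiftPath τ x y)))
            ∂(Q (x (Fin.last τ))) ≤
          ENNReal.ofReal
            (Real.exp (-cP * tdW τ Wt δ c₀ x ^ δ) * Real.exp (tdW τ Wt δ c₀ x) *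
                (if RP ≤ tdW τ Wt δ c₀ x then 1 else 0) +
              bP * (if tdW τ Wt δ c₀ x < RP then 1 else 0)) := by
  have hτR : (1:ℝ) ≤ (τ:ℝ) := by exact_mod_cast hτ
  have hτpos : (0:ℝ) < (τ:ℝ) := by linarith
  have hδ0 : (0:ℝ) < δ := by linarith
  -- constants
  obtain ⟨c₀, hc₀def, hc₀⟩ : ∃ c₀ : ℝ, c₀ = c / (2*τ) ∧ 0 < c₀ :=
    ⟨_, rfl, by positivity⟩
  have hc₀τ : c₀ * τ = c / 2 := by
    rw [hc₀def]; field_simp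
  have hc₀d : (0:ℝ) < c₀ ^ δ := Real.rpow_pos_of_pos hc₀ δ
  obtain ⟨R₁, hR₁def, hR₁1⟩ : ∃ R₁ : ℝ, R₁ = max R₀ 1 ∧ 1 ≤ R₁ :=
    ⟨_, rfl, le_max_right _ _⟩
  have hR₁0 : 0 ≤ R₁ := by linarith
  obtain ⟨cP, hcPdef, hcP⟩ :
      ∃ cP : ℝ, cP = min (c₀ / (c₀ ^ δ * τ)) (min (c/2) (1/(2*τ))) ∧ 0 < cP :=
    ⟨_, rfl, lt_min (by positivity) (lt_min (by positivity) (by positivity))⟩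
  have hcP1 : cP * (c₀ ^ δ * τ) ≤ c₀ := by
    have h1 : cP ≤ c₀ / (c₀ ^ δ * τ) := hcPdef ▸ min_le_left _ _
    exact (le_div_iff₀ (by positivity)).1 h1
  have hcP2 : cP ≤ c / 2 := hcPdef ▸ (min_le_right _ _).trans (min_le_left _ _)
  have hcP3 : 2 * τ * cP ≤ 1 := by
    have h1 : cP ≤ 1/(2*τ) := hcPdef ▸ (min_le_right _ _).trans (min_le_right _ _)
    have := (le_div_iff₀ (by positivity)).1 h1
    linarith
  have hlogb : 0 ≤ Real.log b := Real.log_nonneg hb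
  obtain ⟨RP, hRPdef, hRP1⟩ :
      ∃ RP : ℝ, RP = max (c*τ*R₁ + 2*τ*Real.log b + 2*R₁) 1 ∧ 1 ≤ RP :=
    ⟨_, rfl, le_max_right _ _⟩
  have hRPge : c*τ*R₁ + 2*τ*Real.log b + 2*R₁ ≤ RP := hRPdef ▸ le_max_left _ _
  obtain ⟨bP, hbPdef, hbP⟩ :
      ∃ bP : ℝ, bP = b * Real.exp (RP + (c/2)*R₁) ∧ 0 < bP :=
    ⟨_, rfl, by positivity⟩
  have hexpbP : Real.exp RP ≤ bP := by
    rw [hbPdef]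
    calc Real.exp RP ≤ Real.exp (RP + (c/2)*R₁) :=
          Real.exp_le_exp.2 (le_add_of_nonneg_right (by positivity))
      _ ≤ b * Real.exp (RP + (c/2)*R₁) := le_mul_of_one_le_left (Real.exp_pos _).le hb
  -- basic facts about Wt
  have hVpos : ∀ u, 0 < Vt u := fun u => lt_of_lt_of_le (Real.exp_pos 1) (hVe u)
  have hW1 : ∀ u, 1 ≤ Wt u := by
    intro u
    rw [hWt]
    calc (1:ℝ) = Real.log (Real.exp 1) := (Real.log_exp 1).symm
      _ ≤ Real.log (Vt u) := Real.log_le_log (Real.exp_pos 1) (hVe u)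
  have hWd1 : ∀ u, 1 ≤ Wt u ^ δ := by
    intro u
    calc (1:ℝ) = 1 ^ δ := (Real.one_rpow δ).symm
      _ ≤ Wt u ^ δ := Real.rpow_le_rpow zero_le_one (hW1 u) hδ0.le
  have hself : ∀ r : ℝ, 1 ≤ r → r ^ δ ≤ r := by
    intro r hr
    calc r ^ δ ≤ r ^ (1:ℝ) := Real.rpow_le_rpow_of_exponent_le hr hδ2
      _ = r := Real.rpow_one r
  refine ⟨c₀, cP, bP, RP, hc₀, hcP, hbP, by linarith, ?_⟩
  intro x
  set z := x (Fin.last τ) with hz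
  set wz := Wt z with hwz
  -- sums
  set S : ℝ := ∑ i : Fin τ, (((i : ℕ) : ℝ) + 1) * Wt (x i.castSucc) ^ δ with hSdef
  set T : ℝ := ∑ i : Fin τ, Wt (x i.castSucc) ^ δ with hTdef
  set Sp : ℝ := ∑ i : Fin τ, ((i : ℕ) : ℝ) * Wt (x i.castSucc) ^ δ with hSpdef
  set A : ℝ := ∑ i : Fin τ, (((i : ℕ) : ℝ) + 1) * Wt (x i.succ) ^ δ with hAdef
  have hS_split : S = Sp + T := by
    rw [hSdef, hSpdef, hTdef, ← Finset.sum_add_distrib]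
    exact Finset.sum_congr rfl fun i _ => by ring
  have hA_eq : A = Sp + (τ:ℝ) * wz ^ δ := by
    have h1 := Fin.sum_univ_castSucc
      (f := fun j : Fin (τ+1) => ((j : ℕ) : ℝ) * Wt (x j) ^ δ)
    have h2 := Fin.sum_univ_succ
      (f := fun j : Fin (τ+1) => ((j : ℕ) : ℝ) * Wt (x j) ^ δ)
    rw [h1] at h2
    simp only [Fin.coe_castSucc, Fin.val_succ, Fin.val_last, Fin.val_zero,
      Nat.cast_zero, zero_mul, zero_add, Nat.cast_add, Nat.cast_one] at h2
    rw [hAdef, hSpdef, ← h2, hwz, hz]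
  have hW_eq : tdW τ Wt δ c₀ x = c₀ * S + wz := rfl
  set W := tdW τ Wt δ c₀ x with hWdef
  have hwz1 : 1 ≤ wz := hW1 z
  have hT_ge : (τ:ℝ) ≤ T := by
    rw [hTdef]
    calc (τ:ℝ) = ∑ _i : Fin τ, (1:ℝ) := by simp
      _ ≤ _ := Finset.sum_le_sum fun i _ => hWd1 _
  have hT1 : 1 ≤ T := le_trans hτR hT_ge
  have hT0 : 0 ≤ T := by linarith
  have hS_le : S ≤ τ * T := by
    rw [hSdef, hTdef, Finset.mul_sum]
    refine Finset.sum_le_sum fun i _ => ?_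
    have hi : ((i:ℕ):ℝ) + 1 ≤ (τ:ℝ) := by
      have := i.isLt; exact_mod_cast Nat.succ_le_of_lt this
    have h0 : (0:ℝ) ≤ Wt (x i.castSucc) ^ δ := le_trans zero_le_one (hWd1 _)
    exact mul_le_mul_of_nonneg_right hi h0
  have hS0 : 0 ≤ S := by
    rw [hSdef]
    refine Finset.sum_nonneg fun i _ => ?_
    exact mul_nonneg (by positivity) (le_trans zero_le_one (hWd1 _))
  have hW1' : 1 ≤ W := by
    rw [hW_eq]
    have h0 : 0 ≤ c₀ * S := mul_nonneg hc₀.le hS0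
    linarith
  have hWδ0 : 0 ≤ W ^ δ := Real.rpow_nonneg (by linarith) δ
  have hwzδ0 : 0 ≤ wz ^ δ := le_trans zero_le_one (hWd1 z)
  -- the key identity
  have hA_id : c₀ * A = W - wz - c₀ * T + (c/2) * wz ^ δ := by
    have h : c₀ * A = W - wz - c₀ * T + (c₀ * τ) * wz ^ δ := by
      rw [hA_eq, hW_eq, hS_split]; ring
    rw [h, hc₀τ]
  -- bound on W ^ δ
  have hWpow : W ^ δ ≤ c₀ ^ δ * τ * T + wz ^ δ := by
    have h1 : W ^ δ ≤ (c₀ * S) ^ δ + wz ^ δ := by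
      rw [hW_eq]
      exact rpow_add_le' (mul_nonneg hc₀.le hS0) (by linarith) hδ0.le hδ2
    have h2 : (c₀ * S) ^ δ = c₀ ^ δ * S ^ δ :=
      Real.mul_rpow hc₀.le hS0
    have h3 : S ^ δ ≤ (τ * T) ^ δ :=
      Real.rpow_le_rpow hS0 hS_le hδ0.le
    have h4 : (τ * T) ^ δ = τ ^ δ * T ^ δ := Real.mul_rpow hτpos.le hT0
    have h5 : (τ:ℝ) ^ δ ≤ (τ:ℝ) := hself _ hτR
    have h6 : T ^ δ ≤ T := hself _ hT1
    have h7 : (τ:ℝ) ^ δ * T ^ δ ≤ τ * T := by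
      have hτδ0 : (0:ℝ) ≤ (τ:ℝ) ^ δ := Real.rpow_nonneg hτpos.le δ
      have hTδ0 : (0:ℝ) ≤ T ^ δ := Real.rpow_nonneg hT0 δ
      exact mul_le_mul h5 h6 hTδ0 hτpos.le
    have h8 : c₀ ^ δ * S ^ δ ≤ c₀ ^ δ * (τ * T) := by
      have := h3.trans (h4 ▸ h7)
      exact mul_le_mul_of_nonneg_left this hc₀d.le
    calc W ^ δ ≤ (c₀ * S) ^ δ + wz ^ δ := h1
      _ = c₀ ^ δ * S ^ δ + wz ^ δ := by rw [h2]
      _ ≤ c₀ ^ δ * (τ * T) + wz ^ δ := by linarith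
      _ = c₀ ^ δ * τ * T + wz ^ δ := by ring
  -- integral computation
  have hshift : ∀ y : X, tdW τ Wt δ c₀ (shiftPath τ x y) = c₀ * A + Wt y := by
    intro y
    have h1 : ∀ i : Fin τ, shiftPath τ x y i.castSucc = x i.succ := by
      intro i
      have hi : ((i.castSucc : Fin (τ+1)) : ℕ) < τ := i.isLt
      simp only [shiftPath, dif_pos hi]
      congr 1
    have h2 : shiftPath τ x y (Fin.last τ) = y := by
      simp [shiftPath]
    unfold tdW
    rw [h2, hAdef]
    congr 2
    refine Finset.sum_congr rfl fun i _ => ?_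
    rw [h1 i]
  have hmeasV : Measurable fun y => ENNReal.ofReal (Vt y) := hVmeas.ennreal_ofReal
  have hint : (∫⁻ y, ENNReal.ofReal (Real.exp (tdW τ Wt δ c₀ (shiftPath τ x y))) ∂(Q z))
      = ENNReal.ofReal (Real.exp (c₀ * A)) * ∫⁻ y, ENNReal.ofReal (Vt y) ∂(Q z) := by
    rw [← MeasureTheory.lintegral_const_mul _ hmeasV]
    refine lintegral_congr fun y => ?_
    rw [← ENNReal.ofReal_mul (Real.exp_pos _).le, hshift y, Real.exp_add]
    congr 2
    rw [hWt, Real.exp_log (hVpos y)]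
  rw [hint]
  -- case analysis
  have hE0 : (0:ℝ) ≤ Real.exp (c₀ * A) := (Real.exp_pos _).le
  rcases le_or_gt RP W with hWRP | hWRP
  · -- W ≥ RP : exponential regime
    rw [if_pos hWRP, if_neg (not_lt.2 hWRP)]
    have hgoal : Real.exp (c₀*A) * Real.exp (-cP * W ^ δ) * Real.exp W =
        Real.exp (c₀*A + (W - cP * W ^ δ)) := by
      rw [← Real.exp_add, ← Real.exp_add]; ring_nf
    rcases lt_or_ge R₀ wz with hzR | hzR
    · -- drift case 1
      have hI := hdrift₁ z hzR
      have hkey : cP * W ^ δ ≤ c₀ * T + (c/2) * wz ^ δ := by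
        have b1 : cP * W ^ δ ≤ cP * (c₀ ^ δ * τ * T + wz ^ δ) :=
          mul_le_mul_of_nonneg_left hWpow hcP.le
        have b2 : cP * (c₀ ^ δ * τ) * T ≤ c₀ * T :=
          mul_le_mul_of_nonneg_right hcP1 hT0
        have b3 : cP * wz ^ δ ≤ (c/2) * wz ^ δ :=
          mul_le_mul_of_nonneg_right hcP2 hwzδ0
        linarith only [b1, b2, b3]
      have hreal : Real.exp (c₀*A) * (Real.exp (-c * wz ^ δ) * Vt z) ≤
          Real.exp (-cP * W ^ δ) * Real.exp W * 1 + bP * 0 := by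
        rw [mul_zero, add_zero, mul_one]
        have hVz : Vt z = Real.exp wz := by rw [hwz, hWt, Real.exp_log (hVpos z)]
        rw [hVz, ← Real.exp_add, ← Real.exp_add, ← Real.exp_add]
        apply Real.exp_le_exp.2
        rw [hA_id]
        linarith
      calc ENNReal.ofReal (Real.exp (c₀*A)) * ∫⁻ y, ENNReal.ofReal (Vt y) ∂(Q z)
            ≤ ENNReal.ofReal (Real.exp (c₀*A)) *
              ENNReal.ofReal (Real.exp (-c * wz ^ δ) * Vt z) := mul_le_mul_right hI _
        _ = ENNReal.ofReal (Real.exp (c₀*A) * (Real.exp (-c * wz ^ δ) * Vt z)) :=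
            (ENNReal.ofReal_mul hE0).symm
        _ ≤ _ := ENNReal.ofReal_le_ofReal hreal
    · -- drift case 2
      have hI := hdrift₂ z hzR
      have hwzR₁ : wz ≤ R₁ := by rw [hR₁def]; exact le_max_of_le_left hzR
      have hwzδR₁ : wz ^ δ ≤ R₁ := (hself wz hwz1).trans hwzR₁
      have hWδW : W ^ δ ≤ W := hself _ hW1'
      have hRPW : c*τ*R₁ + 2*τ*Real.log b + 2*R₁ ≤ W := hRPge.trans hWRP
      have B1 : 2*τ*(cP * W ^ δ) ≤ W := by
        have h := mul_le_mul_of_nonneg_right hcP3 hWδ0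
        linarith only [h, hWδW]
      have B2 : W - R₁ ≤ τ*(c₀*T) := by
        have h1 : c₀ * S ≤ c₀ * (τ * T) := mul_le_mul_of_nonneg_left hS_le hc₀.le
        have h2 : W = c₀ * S + wz := hW_eq
        linarith only [h1, h2, hwzR₁]
      have B3 : c*τ*wz ^ δ ≤ c*τ*R₁ :=
        mul_le_mul_of_nonneg_left hwzδR₁ (by positivity)
      have B4 : (0:ℝ) ≤ τ*wz := mul_nonneg hτpos.le (by linarith only [hwz1])
      have Gτ : (τ:ℝ)*(cP*W ^ δ + (c/2)*wz ^ δ + Real.log b) ≤ τ*(wz + c₀*T) := by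
        linarith only [B1, B2, B3, B4, hRPW]
      have G : cP*W ^ δ + (c/2)*wz ^ δ + Real.log b ≤ wz + c₀*T :=
        (mul_le_mul_iff_right₀ hτpos).1 Gτ
      have hb0 : (0:ℝ) < b := by linarith
      have hreal : Real.exp (c₀*A) * b ≤
          Real.exp (-cP * W ^ δ) * Real.exp W * 1 + bP * 0 := by
        rw [mul_zero, add_zero, mul_one, ← Real.exp_add]
        have h : Real.exp (c₀*A) * b = Real.exp (c₀*A + Real.log b) := by
          rw [Real.exp_add, Real.exp_log hb0]
        rw [h]
        apply Real.exp_le_exp.2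
        rw [hA_id]
        linarith only [G]
      calc ENNReal.ofReal (Real.exp (c₀*A)) * ∫⁻ y, ENNReal.ofReal (Vt y) ∂(Q z)
            ≤ ENNReal.ofReal (Real.exp (c₀*A)) * ENNReal.ofReal b := mul_le_mul_right hI _
        _ = ENNReal.ofReal (Real.exp (c₀*A) * b) := (ENNReal.ofReal_mul hE0).symm
        _ ≤ _ := ENNReal.ofReal_le_ofReal hreal
  · -- W < RP : bounded regime
    rw [if_neg (not_le.2 hWRP), if_pos hWRP]
    rcases lt_or_ge R₀ wz with hzR | hzR
    · -- drift case 1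
      have hI := hdrift₁ z hzR
      have hkey : cP * W ^ δ ≤ c₀ * T + (c/2) * wz ^ δ := by
        have b1 : cP * W ^ δ ≤ cP * (c₀ ^ δ * τ * T + wz ^ δ) :=
          mul_le_mul_of_nonneg_left hWpow hcP.le
        have b2 : cP * (c₀ ^ δ * τ) * T ≤ c₀ * T :=
          mul_le_mul_of_nonneg_right hcP1 hT0
        have b3 : cP * wz ^ δ ≤ (c/2) * wz ^ δ :=
          mul_le_mul_of_nonneg_right hcP2 hwzδ0
        linarith only [b1, b2, b3]
      have hreal : Real.exp (c₀*A) * (Real.exp (-c * wz ^ δ) * Vt z) ≤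
          Real.exp (-cP * W ^ δ) * Real.exp W * 0 + bP * 1 := by
        rw [mul_zero, zero_add, mul_one]
        have hVz : Vt z = Real.exp wz := by rw [hwz, hWt, Real.exp_log (hVpos z)]
        rw [hVz, ← Real.exp_add, ← Real.exp_add]
        calc Real.exp (c₀*A + (-c * wz ^ δ + wz)) ≤ Real.exp RP := by
              apply Real.exp_le_exp.2
              rw [hA_id]
              have hc₀T : 0 ≤ c₀ * T := mul_nonneg hc₀.le hT0
              have hcw : 0 ≤ (c/2) * wz ^ δ := mul_nonneg (by positivity) hwzδ0
              linarith only [hc₀T, hcw, hWRP, hkey, hcP, hWδ0,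
                mul_nonneg hcP.le hWδ0]
          _ ≤ bP := hexpbP
      calc ENNReal.ofReal (Real.exp (c₀*A)) * ∫⁻ y, ENNReal.ofReal (Vt y) ∂(Q z)
            ≤ ENNReal.ofReal (Real.exp (c₀*A)) *
              ENNReal.ofReal (Real.exp (-c * wz ^ δ) * Vt z) := mul_le_mul_right hI _
        _ = ENNReal.ofReal (Real.exp (c₀*A) * (Real.exp (-c * wz ^ δ) * Vt z)) :=
            (ENNReal.ofReal_mul hE0).symm
        _ ≤ _ := ENNReal.ofReal_le_ofReal hreal
    · -- drift case 2
      have hI := hdrift₂ z hzR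
      have hwzR₁ : wz ≤ R₁ := by rw [hR₁def]; exact le_max_of_le_left hzR
      have hwzδR₁ : wz ^ δ ≤ R₁ := (hself wz hwz1).trans hwzR₁
      have hb0 : (0:ℝ) < b := by linarith
      have hreal : Real.exp (c₀*A) * b ≤
          Real.exp (-cP * W ^ δ) * Real.exp W * 0 + bP * 1 := by
        rw [mul_zero, zero_add, mul_one, hbPdef]
        have h1 : Real.exp (c₀*A) ≤ Real.exp (RP + c/2*R₁) := by
          apply Real.exp_le_exp.2
          rw [hA_id]
          have hc₀T : 0 ≤ c₀ * T := mul_nonneg hc₀.le hT0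
          have hcw : (c/2) * wz ^ δ ≤ (c/2) * R₁ :=
            mul_le_mul_of_nonneg_left hwzδR₁ (by positivity)
          linarith only [hc₀T, hcw, hWRP, hwz1]
        calc Real.exp (c₀*A) * b ≤ Real.exp (RP + c/2*R₁) * b :=
              mul_le_mul_of_nonneg_right h1 hb0.le
          _ = b * Real.exp (RP + c/2*R₁) := mul_comm _ _
      calc ENNReal.ofReal (Real.exp (c₀*A)) * ∫⁻ y, ENNReal.ofReal (Vt y) ∂(Q z)
            ≤ ENNReal.ofReal (Real.exp (c₀*A)) * ENNReal.ofReal b := mul_le_mul_right hI _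
        _ = ENNReal.ofReal (Real.exp (c₀*A) * b) := (ENNReal.ofReal_mul hE0).symm
        _ ≤ _ := ENNReal.ofReal_le_ofReal hreal
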